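/- For any two non-tautological linear clauses C and D over n Boolean variables, C and D are satisfied by exactly the same assignments if and only if their linear negations are equal as subspaces: ⟨C⟩ = ⟨D⟩. -/

import Mathlib

namespace XorSAT

/-- An affine equation over `n` Boolean variables: the coefficients of the `n`
variables together with a right-hand side, i.e. a vector in `F₂^(n+1)`. -/
abbrev Eqn (n : ℕ) : Type := (Fin n → ZMod 2) × ZMod 2

/-- The equation `𝟏`, i.e. `0 = 1`, satisfied by no assignment. -/
def oneEq (n : ℕ) : Eqn n := (0, 1)

/-- An assignment `x` satisfies the equation `(a, b)` iff `∑ aᵢ xᵢ = b`. -/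
def Sats {n : ℕ} (x : Fin n → ZMod 2) (e : Eqn n) : Prop :=
  (∑ i, e.1 i * x i) = e.2

/-- A linear clause: a (finite) disjunction of affine equations. -/
abbrev Clause (n : ℕ) : Type := Finset (Eqn n)

/-- An assignment satisfies a linear clause iff it satisfies some equation in it. -/
def SatsClause {n : ℕ} (x : Fin n → ZMod 2) (C : Clause n) : Prop :=
  ∃ e ∈ C, Sats x e

/-- A clause is non-tautological if some assignment falsifies every equation of it. -/
def NonTaut {n : ℕ} (C : Clause n) : Prop :=
  ∃ x : Fin n → ZMod 2, ∀ e ∈ C, ¬ Sats x e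

/-- The linear negation `⟨C⟩` of a clause `C = f₁ ∨ … ∨ f_m`:
the `F₂`-span of `f₁ + 𝟏, …, f_m + 𝟏`. -/
def linneg {n : ℕ} (C : Clause n) : Submodule (ZMod 2) (Eqn n) :=
  Submodule.span (ZMod 2) ((fun e => e + oneEq n) '' (C : Set (Eqn n)))

/-- A set of equations is consistent if some assignment satisfies all of them. -/
def Consistent {n : ℕ} (U : Set (Eqn n)) : Prop :=
  ∃ x : Fin n → ZMod 2, ∀ e ∈ U, Sats x e

/-- The `F₂`-linear span of a set of equations, as a submodule. -/
def spn {n : ℕ} (U : Set (Eqn n)) : Submodule (ZMod 2) (Eqn n) :=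
  Submodule.span (ZMod 2) U

/-- The evaluation functional of an assignment `x`: `(a, b) ↦ ∑ aᵢ xᵢ + b`. -/
def phi (n : ℕ) (x : Fin n → ZMod 2) : Eqn n →ₗ[ZMod 2] ZMod 2 where
  toFun e := (∑ i, e.1 i * x i) + e.2
  map_add' e f := by
    simp only [Prod.fst_add, Prod.snd_add, Pi.add_apply, add_mul, Finset.sum_add_distrib]
    ring
  map_smul' c e := by
    simp only [Prod.smul_fst, Prod.smul_snd, Pi.smul_apply, smul_eq_mul, RingHom.id_apply,
      Finset.mul_sum, mul_add, mul_assoc]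

@[simp] theorem phi_apply {n : ℕ} (x : Fin n → ZMod 2) (e : Eqn n) :
    phi n x e = (∑ i, e.1 i * x i) + e.2 := rfl

theorem notSats_iff {n : ℕ} (x : Fin n → ZMod 2) (e : Eqn n) :
    ¬ Sats x e ↔ phi n x (e + oneEq n) = 0 := by
  have key : ∀ a b : ZMod 2, (¬ a = b) ↔ a + b + 1 = 0 := by decide
  simp [Sats, oneEq, key, add_assoc]

/-- Every functional sending `𝟏` to `1` is the evaluation functional of some assignment. -/
theorem exists_assign {n : ℕ} (f : Eqn n →ₗ[ZMod 2] ZMod 2) (hf : f (oneEq n) = 1) :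
    ∃ x, f = phi n x := by
  refine ⟨fun i => f (Pi.single i 1, 0), ?_⟩
  apply LinearMap.ext
  intro e
  have he : e = (∑ i, e.1 i • ((Pi.single i 1 : Fin n → ZMod 2), (0:ZMod 2))) + e.2 • oneEq n := by
    refine Prod.ext ?_ ?_
    · funext j
      simp [oneEq, Prod.fst_sum, Finset.sum_apply, Pi.single_apply, mul_ite]
    · simp [oneEq, Prod.snd_sum]
  conv_lhs => rw [he]
  rw [map_add, map_sum, map_smul, hf, smul_eq_mul, mul_one, phi_apply]
  congr 1
  refine Finset.sum_congr rfl fun i _ => ?_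
  rw [map_smul, smul_eq_mul]

theorem falsify_iff {n : ℕ} (x : Fin n → ZMod 2) (C : Clause n) :
    (∀ e ∈ C, ¬ Sats x e) ↔ linneg C ≤ LinearMap.ker (phi n x) := by
  rw [linneg, Submodule.span_le, Set.image_subset_iff]
  constructor
  · intro h e he
    exact (notSats_iff x e).mp (h e he)
  · intro h e he
    exact (notSats_iff x e).mpr (h (Finset.mem_coe.mpr he))

theorem satsClause_iff {n : ℕ} (x : Fin n → ZMod 2) (C : Clause n) :
    SatsClause x C ↔ ¬ linneg C ≤ LinearMap.ker (phi n x) := by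
  rw [← falsify_iff]
  unfold SatsClause
  push_neg
  simp

theorem linneg_le {n : ℕ} (C D : Clause n) (x₀ : Fin n → ZMod 2)
    (h : ∀ x, SatsClause x C ↔ SatsClause x D)
    (hC₀ : linneg C ≤ LinearMap.ker (phi n x₀)) :
    linneg D ≤ linneg C := by
  have hD₀ : linneg D ≤ LinearMap.ker (phi n x₀) := by
    by_contra hd
    exact ((satsClause_iff x₀ C).mp ((h x₀).mpr ((satsClause_iff x₀ D).mpr hd))) hC₀
  intro v hv
  by_contra hvC
  set W' : Submodule (ZMod 2) (Eqn n) :=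
    linneg C ⊔ Submodule.span (ZMod 2) {oneEq n} with hW'
  have hone : oneEq n ∈ W' := le_sup_right (a := linneg C) (Submodule.mem_span_singleton_self _)
  have hCW : linneg C ≤ W' := le_sup_left
  have hvW' : v ∉ W' := by
    intro hmem
    rcases Submodule.mem_sup.mp hmem with ⟨c, hc, z, hz, hcz⟩
    rcases Submodule.mem_span_singleton.mp hz with ⟨t, rfl⟩
    have ht : t = 0 ∨ t = 1 := (by decide : ∀ s : ZMod 2, s = 0 ∨ s = 1) t
    rcases ht with rfl | rfl
    · rw [zero_smul, add_zero] at hcz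
      exact hvC (hcz ▸ hc)
    · rw [one_smul] at hcz
      have h1 : phi n x₀ v = 0 := hD₀ hv
      have h2 : phi n x₀ c = 0 := hC₀ hc
      have h3 : phi n x₀ (oneEq n) = 1 := by simp [oneEq]
      rw [← hcz, map_add, h2, h3] at h1
      simp at h1
  obtain ⟨ψ, hψv, hψW⟩ := W'.exists_dual_map_eq_bot_of_notMem hvW' inferInstance
  have hψ0 : ∀ w ∈ W', ψ w = 0 := by
    intro w hw
    have : ψ w ∈ W'.map ψ := Submodule.mem_map_of_mem hw
    rwa [hψW, Submodule.mem_bot] at this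
  have hψv1 : ψ v = 1 := by
    have key : ∀ a : ZMod 2, a ≠ 0 → a = 1 := by decide
    exact key _ hψv
  obtain ⟨x, hx⟩ := exists_assign (phi n x₀ + ψ) (by
    rw [LinearMap.add_apply, hψ0 _ hone]
    simp [oneEq])
  have hCx : linneg C ≤ LinearMap.ker (phi n x) := by
    intro c hc
    rw [LinearMap.mem_ker, ← hx, LinearMap.add_apply, hC₀ hc, hψ0 _ (hCW hc), add_zero]
  have hDx : linneg D ≤ LinearMap.ker (phi n x) := by
    by_contra hd
    exact ((satsClause_iff x C).mp ((h x).mpr ((satsClause_iff x D).mpr hd))) hCx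
  have : phi n x v = 0 := hDx hv
  rw [← hx, LinearMap.add_apply, hD₀ hv, hψv1, zero_add] at this
  exact one_ne_zero this

/-- Two non-tautological linear clauses over `n` Boolean variables
are satisfied by exactly the same assignments iff their linear negations are equal
as subspaces. -/
theorem stmt0 {n : ℕ} (C D : Clause n) (hC : NonTaut C) (hD : NonTaut D) :
    (∀ x : Fin n → ZMod 2, SatsClause x C ↔ SatsClause x D) ↔ linneg C = linneg D := by
  constructor
  · intro h
    obtain ⟨x₀, hx₀⟩ := hC
    obtain ⟨y₀, hy₀⟩ := hD
    exact le_antisymm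
      (linneg_le D C y₀ (fun x => (h x).symm) ((falsify_iff y₀ D).mp hy₀))
      (linneg_le C D x₀ h ((falsify_iff x₀ C).mp hx₀))
  · intro h x
    rw [satsClause_iff, satsClause_iff, h]

end XorSAT
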